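/- Let $s\in(1/2,1)$ and let $b:(0,\infty)\to(1/2,1)$ and $q:(0,\infty)\to(0,\infty)$ be functions with $\lim_{\alpha\to\infty} b(\alpha) = s$ and $\lim_{\alpha\to\infty} q(\alpha) = 0$. Then there exist constants $Z\ge 1$ and $Q>0$ such that for all $\alpha\in(Q,\infty)$: $\frac{1}{Z} \le \frac{K_{b(\alpha)}(q(\alpha))}{q(\alpha)^{-2+2b(\alpha)}} \le Z$. -/

import Mathlib

open Filter MeasureTheory Set Real

/-- `K b q = ∑_{l=1}^∞ e^{-lq} l^{1-2b}`. -/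
noncomputable def K (b q : ℝ) : ℝ :=
  ∑' l : ℕ, Real.exp (-((l : ℝ) + 1) * q) * ((l : ℝ) + 1) ^ (1 - 2 * b)

lemma summable_K (b q : ℝ) (hb : 1/2 < b) (hq : 0 < q) :
    Summable (fun l : ℕ => Real.exp (-((l : ℝ) + 1) * q) * ((l : ℝ) + 1) ^ (1 - 2 * b)) := by
  have hg : Summable (fun l : ℕ => Real.exp (-q) ^ l) := by
    refine summable_geometric_of_lt_one (Real.exp_nonneg _) ?_
    rw [Real.exp_lt_one_iff]; linarith
  refine Summable.of_nonneg_of_le (fun l => by positivity) ?_ hg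
  intro l
  have h1 : Real.exp (-((l : ℝ) + 1) * q) ≤ Real.exp (-q) ^ l := by
    rw [← Real.exp_nat_mul]
    apply Real.exp_le_exp.2
    nlinarith [Nat.cast_nonneg (α := ℝ) l]
  have h2 : ((l : ℝ) + 1) ^ (1 - 2 * b) ≤ 1 :=
    Real.rpow_le_one_of_one_le_of_nonpos (by nlinarith [Nat.cast_nonneg (α := ℝ) l]) (by linarith)
  calc Real.exp (-((l : ℝ) + 1) * q) * ((l : ℝ) + 1) ^ (1 - 2 * b)
      ≤ Real.exp (-((l : ℝ) + 1) * q) * 1 :=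
        mul_le_mul_of_nonneg_left h2 (Real.exp_nonneg _)
    _ ≤ Real.exp (-q) ^ l := by rw [mul_one]; exact h1

lemma K_lower (b q : ℝ) (hb : b ∈ Ioo (1/2:ℝ) 1) (hq : 0 < q) (hq2 : q ≤ 1/2) :
    Real.exp (-1) / 2 * q ^ (-2 + 2*b) ≤ K b q := by
  obtain ⟨hb1, hb2⟩ := hb
  set N := Nat.floor (1/q) with hN
  have hqinv : (2:ℝ) ≤ 1/q := by
    rw [le_div_iff₀ hq]; linarith
  have hN1 : 1/(2*q) ≤ (N:ℝ) := by
    have := Nat.sub_one_lt_floor (1/q)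
    have h2q : (0:ℝ) < 2*q := by linarith
    rw [div_le_iff₀ h2q]
    have : 1/q - 1 ≤ (N:ℝ) := le_of_lt this
    have hq' : 1/q * q = 1 := one_div_mul_cancel hq.ne'
    nlinarith
  have hNle : (N:ℝ) ≤ 1/q := Nat.floor_le (by positivity)
  have hNpos : (0:ℝ) < N := lt_of_lt_of_le (by positivity) hN1
  -- each term in head is at least exp(-1) * N^(1-2b)
  have hterm : ∀ l ∈ Finset.range N,
      Real.exp (-1) * (N:ℝ) ^ (1 - 2*b) ≤
        Real.exp (-((l : ℝ) + 1) * q) * ((l : ℝ) + 1) ^ (1 - 2 * b) := by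
    intro l hl
    have hlN : (l:ℝ) + 1 ≤ (N:ℝ) := by
      have := Finset.mem_range.1 hl
      exact_mod_cast Nat.succ_le_of_lt this
    have hexp : Real.exp (-1:ℝ) ≤ Real.exp (-((l : ℝ) + 1) * q) := by
      apply Real.exp_le_exp.2
      have : ((l:ℝ)+1) * q ≤ (N:ℝ) * q := mul_le_mul_of_nonneg_right hlN hq.le
      have h2 : (N:ℝ) * q ≤ 1 := by
        calc (N:ℝ)*q ≤ (1/q)*q := mul_le_mul_of_nonneg_right hNle hq.le
          _ = 1 := one_div_mul_cancel hq.ne'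
      nlinarith
    have hrpow : (N:ℝ) ^ (1 - 2*b) ≤ ((l:ℝ)+1) ^ (1 - 2*b) :=
      Real.rpow_le_rpow_of_nonpos (by positivity) hlN (by linarith)
    exact mul_le_mul hexp hrpow (Real.rpow_nonneg (by positivity) _) (Real.exp_nonneg _)
  have hsum : (N:ℝ) * (Real.exp (-1) * (N:ℝ) ^ (1 - 2*b)) ≤ K b q := by
    calc (N:ℝ) * (Real.exp (-1) * (N:ℝ) ^ (1 - 2*b))
        = ∑ l ∈ Finset.range N, Real.exp (-1) * (N:ℝ) ^ (1 - 2*b) := by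
          rw [Finset.sum_const, Finset.card_range, nsmul_eq_mul]
      _ ≤ ∑ l ∈ Finset.range N,
            Real.exp (-((l : ℝ) + 1) * q) * ((l : ℝ) + 1) ^ (1 - 2 * b) :=
          Finset.sum_le_sum hterm
      _ ≤ K b q := Summable.sum_le_tsum _ (fun l _ => by positivity)
            (summable_K b q hb1 hq)
  have key : Real.exp (-1) / 2 * q ^ (-2 + 2*b) ≤
      (N:ℝ) * (Real.exp (-1) * (N:ℝ) ^ (1 - 2*b)) := by
    have hNpow : (N:ℝ) * (N:ℝ) ^ (1 - 2*b) = (N:ℝ) ^ (2 - 2*b) := by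
      rw [show (2 - 2*b) = 1 + (1 - 2*b) by ring, Real.rpow_add hNpos, Real.rpow_one]
    have h1 : (1/(2*q)) ^ (2 - 2*b) ≤ (N:ℝ) ^ (2 - 2*b) :=
      Real.rpow_le_rpow (by positivity) hN1 (by linarith)
    have h2 : (1/(2*q)) ^ (2 - 2*b) = 2 ^ (-2 + 2*b) * q ^ (-2 + 2*b) := by
      rw [one_div, Real.inv_rpow (by positivity), ← Real.rpow_neg (by positivity),
        show -(2-2*b) = -2+2*b by ring, Real.mul_rpow (by norm_num) hq.le]
    have h3 : (1/2 : ℝ) ≤ (2:ℝ) ^ (-2 + 2*b) := by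
      have := Real.rpow_le_rpow_of_exponent_le (one_le_two) (by linarith : (-1:ℝ) ≤ -2 + 2*b)
      rw [Real.rpow_neg_one] at this
      linarith
    have hq' : (0:ℝ) < q ^ (-2 + 2*b) := Real.rpow_pos_of_pos hq _
    calc Real.exp (-1) / 2 * q ^ (-2 + 2*b)
        ≤ Real.exp (-1) * ((1/(2*q)) ^ (2 - 2*b)) := by
          rw [h2]
          have : (1/2:ℝ) * q ^ (-2+2*b) ≤ 2 ^ (-2 + 2*b) * q ^ (-2 + 2*b) :=
            mul_le_mul_of_nonneg_right h3 hq'.le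
          calc Real.exp (-1) / 2 * q ^ (-2 + 2*b)
              = Real.exp (-1) * ((1/2) * q ^ (-2+2*b)) := by ring
            _ ≤ Real.exp (-1) * (2 ^ (-2 + 2*b) * q ^ (-2 + 2*b)) :=
                mul_le_mul_of_nonneg_left this (Real.exp_nonneg _)
      _ ≤ Real.exp (-1) * (N:ℝ) ^ (2 - 2*b) :=
          mul_le_mul_of_nonneg_left h1 (Real.exp_nonneg _)
      _ = (N:ℝ) * (Real.exp (-1) * (N:ℝ) ^ (1 - 2*b)) := by rw [← hNpow]; ring
  linarith [le_trans key hsum]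

lemma K_upper (b q : ℝ) (hb : b ∈ Ioo (1/2:ℝ) 1) (hq : 0 < q) (hq2 : q ≤ 1/2) :
    K b q ≤ (1 + 1/(2-2*b) + 2*Real.exp 1) * q ^ (-2 + 2*b) := by
  obtain ⟨hb1, hb2⟩ := hb
  set N := Nat.floor (1/q) with hNdef
  have hqinv : (2:ℝ) ≤ 1/q := by rw [le_div_iff₀ hq]; linarith
  have hN2 : 2 ≤ N := Nat.le_floor (by exact_mod_cast hqinv)
  have hN1 : 1/(2*q) ≤ (N:ℝ) := by
    have h := Nat.sub_one_lt_floor (1/q)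
    have h2q : (0:ℝ) < 2*q := by linarith
    rw [div_le_iff₀ h2q]
    have h' : 1/q - 1 ≤ (N:ℝ) := le_of_lt h
    have hq' : 1/q * q = 1 := one_div_mul_cancel hq.ne'
    nlinarith
  have hNle : (N:ℝ) ≤ 1/q := Nat.floor_le (by positivity)
  have hNpos : (0:ℝ) < N := by positivity -- fix below
  have hqe : (0:ℝ) < q ^ (-2 + 2*b) := Real.rpow_pos_of_pos hq _
  have hone : (1:ℝ) ≤ q ^ (-2 + 2*b) :=
    Real.one_le_rpow_of_pos_of_le_one_of_nonpos hq (by linarith) (by linarith)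
  have hsumm := summable_K b q hb1 hq
  -- split
  have hsplit := Summable.sum_add_tsum_nat_add N hsumm
  rw [show K b q = ∑' l : ℕ, Real.exp (-((l : ℝ) + 1) * q) * ((l : ℝ) + 1) ^ (1 - 2 * b) from rfl,
    ← hsplit]
  -- head bound
  have hhead : ∑ l ∈ Finset.range N, Real.exp (-((l : ℝ) + 1) * q) * ((l : ℝ) + 1) ^ (1 - 2 * b)
      ≤ (1 + 1/(2-2*b)) * q ^ (-2 + 2*b) := by
    have step1 : ∑ l ∈ Finset.range N, Real.exp (-((l : ℝ) + 1) * q) * ((l : ℝ) + 1) ^ (1 - 2 * b)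
        ≤ ∑ l ∈ Finset.range N, ((l : ℝ) + 1) ^ (1 - 2 * b) := by
      apply Finset.sum_le_sum
      intro l _
      have h1 : Real.exp (-((l : ℝ) + 1) * q) ≤ 1 := by
        rw [Real.exp_le_one_iff]
        nlinarith [Nat.cast_nonneg (α := ℝ) l]
      nlinarith [Real.rpow_nonneg (by positivity : (0:ℝ) ≤ (l:ℝ)+1) (1-2*b),
        Real.exp_nonneg (-((l : ℝ) + 1) * q)]
    have step2 : ∑ l ∈ Finset.range N, ((l : ℝ) + 1) ^ (1 - 2 * b)
        ≤ 1 + (N:ℝ) ^ (2 - 2*b) / (2 - 2*b) := by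
      obtain ⟨M, hM⟩ : ∃ M, N = M + 1 := ⟨N - 1, by omega⟩
      have hS : ∑ l ∈ Finset.range N, ((l:ℝ) + 1) ^ (1 - 2 * b)
          = (∑ i ∈ Finset.range M, (((i+1:ℕ):ℝ) + 1) ^ (1 - 2 * b)) + 1 := by
        rw [hM, Finset.sum_range_succ']
        norm_num
      rw [hS]
      have hint : ∑ i ∈ Finset.range M, (((i+1:ℕ):ℝ) + 1) ^ (1 - 2 * b)
          ≤ ∫ x in (1:ℝ)..(1 + (M:ℕ)), x ^ (1 - 2*b) := by
        have hanti : AntitoneOn (fun x : ℝ => x ^ (1 - 2*b)) (Icc (1:ℝ) (1 + (M:ℕ))) := by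
          intro x hx y hy hxy
          exact Real.rpow_le_rpow_of_nonpos (lt_of_lt_of_le one_pos hx.1) hxy (by linarith)
        have := hanti.sum_le_integral
        convert this using 2 with i
        push_cast; ring
      have hval : ∫ x in (1:ℝ)..(1 + (M:ℕ)), x ^ (1 - 2*b)
          = ((1 + (M:ℕ):ℝ) ^ (2 - 2*b) - 1) / (2 - 2*b) := by
        rw [integral_rpow (Or.inl (by linarith : (-1:ℝ) < 1 - 2*b))]
        rw [Real.one_rpow]
        norm_num
        ring_nf
      have hcast : (1 + (M:ℕ):ℝ) = (N:ℝ) := by rw [hM]; push_cast; ring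
      have hfin : ((1 + (M:ℕ):ℝ) ^ (2 - 2*b) - 1) / (2 - 2*b) ≤ (N:ℝ) ^ (2-2*b) / (2-2*b) := by
        rw [hcast]
        apply div_le_div_of_nonneg_right ?_ (by linarith)
        linarith [Real.rpow_nonneg (le_of_lt hNpos) (2-2*b)]
      linarith [hint, hval, hfin]
    -- combine
    have hNq : (N:ℝ) ^ (2 - 2*b) ≤ q ^ (-2 + 2*b) := by
      have h1 : (N:ℝ) ^ (2 - 2*b) ≤ (1/q) ^ (2 - 2*b) :=
        Real.rpow_le_rpow (le_of_lt hNpos) hNle (by linarith)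
      have h2 : ((1:ℝ)/q) ^ (2 - 2*b) = q ^ (-2 + 2*b) := by
        rw [one_div, Real.inv_rpow hq.le, ← Real.rpow_neg hq.le,
          show -(2-2*b) = -2+2*b by ring]
      linarith [h2 ▸ h1]
    have h2b : (0:ℝ) < 2 - 2*b := by linarith
    have hdiv : (N:ℝ) ^ (2-2*b) / (2-2*b) ≤ q ^ (-2+2*b) / (2-2*b) :=
      (div_le_div_iff_of_pos_right h2b).mpr hNq
    have hring : (1 + 1/(2-2*b)) * q ^ (-2+2*b)
        = q ^ (-2+2*b) + q ^ (-2+2*b) / (2-2*b) := by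
      field_simp
    linarith [step1, step2]
  -- tail bound
  have htail : (∑' i : ℕ, Real.exp (-(((i + N : ℕ) : ℝ) + 1) * q) * (((i + N : ℕ) : ℝ) + 1) ^ (1 - 2 * b))
      ≤ 2 * Real.exp 1 * q ^ (-2 + 2*b) := by
    have hgeo : Summable (fun i : ℕ => Real.exp (-q) ^ i) := by
      refine summable_geometric_of_lt_one (Real.exp_nonneg _) ?_
      rw [Real.exp_lt_one_iff]; linarith
    have hterm : ∀ i : ℕ,
        Real.exp (-(((i + N : ℕ) : ℝ) + 1) * q) * (((i + N : ℕ) : ℝ) + 1) ^ (1 - 2 * b)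
        ≤ (N:ℝ) ^ (1 - 2*b) * Real.exp (-q) ^ i := by
      intro i
      have hA : Real.exp (-(((i + N : ℕ) : ℝ) + 1) * q) ≤ Real.exp (-q) ^ i := by
        rw [← Real.exp_nat_mul]
        apply Real.exp_le_exp.2
        push_cast
        nlinarith [Nat.cast_nonneg (α := ℝ) i, Nat.cast_nonneg (α := ℝ) N]
      have hB : (((i + N : ℕ) : ℝ) + 1) ^ (1 - 2 * b) ≤ (N:ℝ) ^ (1 - 2*b) := by
        apply Real.rpow_le_rpow_of_nonpos hNpos ?_ (by linarith)
        push_cast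
        linarith [Nat.cast_nonneg (α := ℝ) i]
      calc Real.exp (-(((i + N : ℕ) : ℝ) + 1) * q) * (((i + N : ℕ) : ℝ) + 1) ^ (1 - 2 * b)
          ≤ Real.exp (-q) ^ i * ((N:ℝ) ^ (1 - 2*b)) :=
            mul_le_mul hA hB (Real.rpow_nonneg (by positivity) _) (by positivity)
        _ = (N:ℝ) ^ (1 - 2*b) * Real.exp (-q) ^ i := by ring
    have hsum2 : (∑' i : ℕ, Real.exp (-(((i + N : ℕ) : ℝ) + 1) * q) * (((i + N : ℕ) : ℝ) + 1) ^ (1 - 2 * b))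
        ≤ (N:ℝ) ^ (1 - 2*b) * (1 - Real.exp (-q))⁻¹ := by
      have hsl : Summable (fun i : ℕ =>
          Real.exp (-(((i + N : ℕ) : ℝ) + 1) * q) * (((i + N : ℕ) : ℝ) + 1) ^ (1 - 2 * b)) :=
        Summable.of_nonneg_of_le (fun i => by positivity) hterm (hgeo.mul_left _)
      have := Summable.tsum_le_tsum hterm hsl (hgeo.mul_left _)
      rwa [tsum_mul_left, tsum_geometric_of_lt_one (Real.exp_nonneg _)
        (by rw [Real.exp_lt_one_iff]; linarith)] at this
    have hA2 : (N:ℝ) ^ (1 - 2*b) ≤ 2 * q ^ (2*b - 1) := by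
      have h1 : (N:ℝ) ^ (1 - 2*b) ≤ (1/(2*q)) ^ (1 - 2*b) :=
        Real.rpow_le_rpow_of_nonpos (by positivity) hN1 (by linarith)
      have h2 : ((1:ℝ)/(2*q)) ^ (1 - 2*b) = 2 ^ (2*b-1) * q ^ (2*b-1) := by
        rw [one_div, Real.inv_rpow (by positivity), ← Real.rpow_neg (by positivity),
          show -(1-2*b) = 2*b-1 by ring, Real.mul_rpow (by norm_num) hq.le]
      have h3 : (2:ℝ) ^ (2*b-1) ≤ 2 := by
        have := Real.rpow_le_rpow_of_exponent_le one_le_two (by linarith : 2*b-1 ≤ (1:ℝ))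
        rwa [Real.rpow_one] at this
      have hq3 : (0:ℝ) ≤ q ^ (2*b-1) := Real.rpow_nonneg hq.le _
      nlinarith [h2 ▸ h1]
    have hB2 : (1 - Real.exp (-q))⁻¹ ≤ Real.exp 1 / q := by
      have he1 : Real.exp (-q) * (Real.exp q - 1) = 1 - Real.exp (-q) := by
        rw [mul_sub, ← Real.exp_add]
        norm_num
      have he2 : q ≤ Real.exp q - 1 := by linarith [Real.add_one_le_exp q]
      have he3 : Real.exp (-1:ℝ) ≤ Real.exp (-q) := Real.exp_le_exp.2 (by linarith)
      have he4 : Real.exp (-1:ℝ) * q ≤ 1 - Real.exp (-q) := by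
        calc Real.exp (-1:ℝ) * q ≤ Real.exp (-q) * (Real.exp q - 1) := by
              apply mul_le_mul he3 he2 hq.le (Real.exp_nonneg _)
          _ = 1 - Real.exp (-q) := he1
      have hpos : (0:ℝ) < Real.exp (-1:ℝ) * q := by positivity
      have h5 : (1 - Real.exp (-q))⁻¹ ≤ (Real.exp (-1:ℝ) * q)⁻¹ :=
        inv_anti₀ hpos he4
      have h6 : (Real.exp (-1:ℝ) * q)⁻¹ = Real.exp 1 / q := by
        rw [mul_inv, Real.exp_neg, inv_inv]
        ring
      linarith [h6 ▸ h5]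
    have hfinal : (N:ℝ) ^ (1 - 2*b) * (1 - Real.exp (-q))⁻¹
        ≤ 2 * Real.exp 1 * q ^ (-2 + 2*b) := by
      have hE : (0:ℝ) < 1 - Real.exp (-q) := by
        have : Real.exp (-q) < 1 := by rw [Real.exp_lt_one_iff]; linarith
        linarith
      have hNn : (0:ℝ) ≤ (N:ℝ) ^ (1 - 2*b) := Real.rpow_nonneg (le_of_lt hNpos) _
      have hqq : (0:ℝ) ≤ Real.exp 1 / q := by positivity
      have step : (N:ℝ) ^ (1 - 2*b) * (1 - Real.exp (-q))⁻¹
          ≤ (2 * q ^ (2*b-1)) * (Real.exp 1 / q) :=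
        mul_le_mul hA2 hB2 (by positivity) (by positivity)
      have hexp : (2 * q ^ (2*b-1)) * (Real.exp 1 / q) = 2 * Real.exp 1 * q ^ (-2+2*b) := by
        have hq1 : q ^ (2*b-1) = q ^ (-2+2*b) * q := by
          have h := Real.rpow_add hq (-2+2*b) 1
          rw [Real.rpow_one] at h
          rw [← h, show (-2+2*b+1) = 2*b-1 by ring]
        rw [hq1]
        field_simp
      linarith [hexp ▸ step]
    linarith [hsum2, hfinal]
  calc (∑ l ∈ Finset.range N, Real.exp (-((l : ℝ) + 1) * q) * ((l : ℝ) + 1) ^ (1 - 2 * b))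
        + (∑' i : ℕ, Real.exp (-(((i + N : ℕ) : ℝ) + 1) * q) * (((i + N : ℕ) : ℝ) + 1) ^ (1 - 2 * b))
      ≤ (1 + 1/(2-2*b)) * q ^ (-2 + 2*b) + 2 * Real.exp 1 * q ^ (-2 + 2*b) :=
        add_le_add hhead htail
    _ = (1 + 1/(2-2*b) + 2*Real.exp 1) * q ^ (-2 + 2*b) := by ring

theorem K_comparable_to_q_rpow (s : ℝ) (hs : s ∈ Ioo (1/2 : ℝ) 1)
    (b q : ℝ → ℝ)
    (hb : ∀ α : ℝ, 0 < α → b α ∈ Ioo (1/2 : ℝ) 1)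
    (hq : ∀ α : ℝ, 0 < α → q α ∈ Ioi (0 : ℝ))
    (hbs : Tendsto b atTop (nhds s))
    (hq0 : Tendsto q atTop (nhds 0)) :
    ∃ Z : ℝ, 1 ≤ Z ∧ ∃ Q : ℝ, 0 < Q ∧ ∀ α ∈ Ioi Q,
      1 / Z ≤ K (b α) (q α) / q α ^ (-2 + 2 * b α) ∧
      K (b α) (q α) / q α ^ (-2 + 2 * b α) ≤ Z := by
  obtain ⟨hs1, hs2⟩ := hs
  have hs3 : (0:ℝ) < 1 - s := by linarith
  set Z := 1 + 1/(1-s) + 2*Real.exp 1 with hZdef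
  have hZ1 : (1:ℝ) ≤ Z := by
    have h1 : (0:ℝ) < 1/(1-s) := by positivity
    have h2 := Real.exp_pos 1
    rw [hZdef]; linarith
  have hZpos : (0:ℝ) < Z := lt_of_lt_of_le one_pos hZ1
  have hZge : 2*Real.exp 1 ≤ Z := by
    have h1 : (0:ℝ) < 1/(1-s) := by positivity
    rw [hZdef]; linarith
  have h1 : ∀ᶠ α in atTop, b α ≤ (s+1)/2 :=
    hbs.eventually (eventually_le_nhds (by linarith))
  have h2 : ∀ᶠ α in atTop, q α ≤ 1/2 :=
    hq0.eventually (eventually_le_nhds (by norm_num))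
  obtain ⟨A, hA⟩ := eventually_atTop.1 (h1.and h2)
  refine ⟨Z, hZ1, max A 1, lt_of_lt_of_le one_pos (le_max_right A 1), ?_⟩
  intro α hα
  have hα1 : 1 < α := lt_of_le_of_lt (le_max_right A 1) hα
  have hαpos : 0 < α := by linarith
  have hAα : A ≤ α := le_of_lt (lt_of_le_of_lt (le_max_left A 1) hα)
  obtain ⟨hbαs, hqα2⟩ := hA α hAα
  have hbα := hb α hαpos
  have hqα : 0 < q α := hq α hαpos
  have hlow := K_lower (b α) (q α) hbα hqα hqα2
  have hupp := K_upper (b α) (q α) hbα hqα hqα2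
  have hE : 0 < q α ^ (-2 + 2 * b α) := Real.rpow_pos_of_pos hqα _
  have hKpos : 0 < K (b α) (q α) := lt_of_lt_of_le (by positivity) hlow
  constructor
  · rw [div_le_div_iff₀ hZpos hE, one_mul]
    have hee : Real.exp (-1:ℝ) * Real.exp 1 = 1 := by
      rw [← Real.exp_add]; norm_num
    have h' := mul_le_mul_of_nonneg_right hlow
      (le_of_lt (by positivity : (0:ℝ) < 2*Real.exp 1))
    calc q α ^ (-2 + 2 * b α)
        = Real.exp (-1) / 2 * q α ^ (-2 + 2 * b α) * (2*Real.exp 1) := by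
          rw [show Real.exp (-1) / 2 * q α ^ (-2 + 2 * b α) * (2*Real.exp 1)
            = (Real.exp (-1) * Real.exp 1) * q α ^ (-2 + 2 * b α) by ring, hee, one_mul]
      _ ≤ K (b α) (q α) * (2*Real.exp 1) := h'
      _ ≤ K (b α) (q α) * Z := mul_le_mul_of_nonneg_left hZge hKpos.le
  · rw [div_le_iff₀ hE]
    refine le_trans hupp (mul_le_mul_of_nonneg_right ?_ hE.le)
    have hcoef : 1/(2-2*b α) ≤ 1/(1-s) := by
      apply one_div_le_one_div_of_le hs3
      linarith
    rw [hZdef]; linarith
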